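/- Let λ, ε, k0, k3 ∈ ℝ with ε ≠ 0 and σ ∈ {+1,−1}, and let A : ℝ⁴ → ℝ⁴ be the plane-wave ansatz. Take the κ-Minkowski structure constants, the κ-Minkowski matrices γ, ρ, the Lie-Poisson bracket, the field strength F, the covariant derivative D, and the generalized equations-of-motion expression E_G with parameter α = −1/12. Then E_G^a(x) = 0 for every x ∈ ℝ⁴ and every a ∈ {0,1,2,3} if and only if the deformed dispersion relation (1 − λ²ε²) k0² − k3² = 0 holds. -/
import Mathlib


set_option autoImplicit false

open scoped BigOperators

/-- Partial derivative `∂_a u (x)` of `u : ℝ⁴ → ℝ`. -/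
noncomputable def pd (a : Fin 4) (u : (Fin 4 → ℝ) → ℝ) (x : Fin 4 → ℝ) : ℝ :=
  fderiv ℝ u x (Pi.single a 1)

/-- Lie-Poisson bracket `{u,v}(x) = Σ_{a,b,c} f^{ab}_c x^c ∂_a u ∂_b v`. -/
noncomputable def pb (f : Fin 4 → Fin 4 → Fin 4 → ℝ)
    (u v : (Fin 4 → ℝ) → ℝ) (x : Fin 4 → ℝ) : ℝ :=
  ∑ a, ∑ b, ∑ c, f a b c * x c * pd a u x * pd b v x

/-- Covariant derivative `(D_a ψ)(x) = Σ_m ρ^m_a(A(x)) (Σ_l γ^l_m(A(x)) ∂_l ψ(x) + {A_m, ψ}(x))`. -/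
noncomputable def Dcov (f : Fin 4 → Fin 4 → Fin 4 → ℝ)
    (γ ρ : (Fin 4 → ℝ) → Matrix (Fin 4) (Fin 4) ℝ)
    (A : (Fin 4 → ℝ) → Fin 4 → ℝ) (a : Fin 4)
    (ψ : (Fin 4 → ℝ) → ℝ) (x : Fin 4 → ℝ) : ℝ :=
  ∑ m, ρ (A x) m a * ((∑ l, γ (A x) l m * pd l ψ x) + pb f (fun y => A y m) ψ x)

/-- The Minkowski metric `η = diag(1,−1,−1,−1)`. -/
noncomputable def ηm : Matrix (Fin 4) (Fin 4) ℝ := Matrix.diagonal ![1, -1, -1, -1]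

/-- Indices raised with `η`: `F^{ab}(x) = Σ_{c,e} η^{ac} η^{be} F_{ce}(x)`. -/
noncomputable def Fup (F : (Fin 4 → ℝ) → Matrix (Fin 4) (Fin 4) ℝ)
    (a b : Fin 4) (x : Fin 4 → ℝ) : ℝ :=
  ∑ c, ∑ e, ηm a c * ηm b e * F x c e

/-- The covariant equations-of-motion expression `E_C^a(x)`. -/
noncomputable def EC (f : Fin 4 → Fin 4 → Fin 4 → ℝ)
    (γ ρ : (Fin 4 → ℝ) → Matrix (Fin 4) (Fin 4) ℝ)
    (A : (Fin 4 → ℝ) → Fin 4 → ℝ)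
    (F : (Fin 4 → ℝ) → Matrix (Fin 4) (Fin 4) ℝ)
    (a : Fin 4) (x : Fin 4 → ℝ) : ℝ :=
  (∑ c, Dcov f γ ρ A c (fun y => Fup F c a y) x)
  + (1/2) * (∑ d, ∑ e, ∑ b, F x d e * f d e b * Fup F a b x)
  - ∑ d, ∑ e, ∑ b, F x d e * f a e b * Fup F d b x

/-- κ-Minkowski structure constants `f^{ab}_c = λ(δ^a_0 δ^b_c − δ^b_0 δ^a_c)`. -/
def fκ (lam : ℝ) (a b c : Fin 4) : ℝ :=
  lam * ((if a = 0 then 1 else 0) * (if b = c then 1 else 0)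
       - (if b = 0 then 1 else 0) * (if a = c then 1 else 0))

/-- The κ-Minkowski matrix `γ(A)`: `γ^0_0 = 1`, `γ^0_c = −λ A_c` (c = 1,2,3),
`γ^l_c = δ^l_c` for `l = 1,2,3` (upper index = row). -/
def γκ (lam : ℝ) (A : Fin 4 → ℝ) : Matrix (Fin 4) (Fin 4) ℝ :=
  fun l c => if l = 0 then (if c = 0 then 1 else -lam * A c)
             else (if l = c then 1 else 0)

/-- The κ-Minkowski matrix `ρ(A) = diag(1, e^{λA_0}, e^{λA_0}, e^{λA_0})`. -/
noncomputable def ρκ (lam : ℝ) (A : Fin 4 → ℝ) : Matrix (Fin 4) (Fin 4) ℝ :=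
  fun m a => if m = a then (if m = 0 then 1 else Real.exp (lam * A 0)) else 0

/-- The phase `φ(x) = k0 x^0 − k3 x^3` of the plane wave. -/
def φpw (k0 k3 : ℝ) (x : Fin 4 → ℝ) : ℝ := k0 * x 0 - k3 * x 3

/-- The plane-wave ansatz `A_0 = 0`, `A_1 = ε sin φ`, `A_2 = −σ ε cos φ`, `A_3 = 0`. -/
noncomputable def Apw (ε σ k0 k3 : ℝ) (x : Fin 4 → ℝ) : Fin 4 → ℝ :=
  ![0, ε * Real.sin (φpw k0 k3 x), -σ * ε * Real.cos (φpw k0 k3 x), 0]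

/-- Field strength `F_{ab}(x)` of a gauge field `A` (as a matrix-valued function). -/
noncomputable def Fstr (f : Fin 4 → Fin 4 → Fin 4 → ℝ)
    (γ ρ : (Fin 4 → ℝ) → Matrix (Fin 4) (Fin 4) ℝ)
    (A : (Fin 4 → ℝ) → Fin 4 → ℝ) (x : Fin 4 → ℝ) : Matrix (Fin 4) (Fin 4) ℝ :=
  fun a b => ∑ c, ∑ e, ρ (A x) c a * ρ (A x) e b *
    ((∑ l, γ (A x) l c * pd l (fun y => A y e) x)
      - (∑ l, γ (A x) l e * pd l (fun y => A y c) x)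
      + pb f (fun y => A y c) (fun y => A y e) x)

/-- Field strength of the κ-Minkowski plane wave. -/
noncomputable def Fpw (lam ε σ k0 k3 : ℝ) : (Fin 4 → ℝ) → Matrix (Fin 4) (Fin 4) ℝ :=
  fun x => Fstr (fκ lam) (γκ lam) (ρκ lam) (Apw ε σ k0 k3) x

/-- The generalized equations-of-motion expression `E_G^a(x)` with parameter `α`,
for the κ-Minkowski plane wave. -/
noncomputable def EGpw (α lam ε σ k0 k3 : ℝ) (a : Fin 4) (x : Fin 4 → ℝ) : ℝ :=
  EC (fκ lam) (γκ lam) (ρκ lam) (Apw ε σ k0 k3) (Fpw lam ε σ k0 k3) a x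
    + α * ((∑ b, ∑ e, ∑ d, fκ lam b a b * Fpw lam ε σ k0 k3 x e d
              * Fup (Fpw lam ε σ k0 k3) e d x)
         + 4 * ∑ b, ∑ e, ∑ d, fκ lam b e b * Fpw lam ε σ k0 k3 x e d
              * Fup (Fpw lam ε σ k0 k3) d a x)

noncomputable def kd (k0 k3 : ℝ) : Fin 4 → ℝ := ![k0, 0, 0, -k3]

lemma hasFDerivAt_phi (k0 k3 : ℝ) (x : Fin 4 → ℝ) :
    HasFDerivAt (φpw k0 k3)
      (k0 • (ContinuousLinearMap.proj 0 : ((Fin 4) → ℝ) →L[ℝ] ℝ)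
        - k3 • (ContinuousLinearMap.proj 3 : ((Fin 4) → ℝ) →L[ℝ] ℝ)) x := by
  have h0 : HasFDerivAt (fun y : Fin 4 → ℝ => y 0)
      (ContinuousLinearMap.proj 0 : ((Fin 4) → ℝ) →L[ℝ] ℝ) x :=
    (ContinuousLinearMap.proj 0 : ((Fin 4) → ℝ) →L[ℝ] ℝ).hasFDerivAt
  have h3 : HasFDerivAt (fun y : Fin 4 → ℝ => y 3)
      (ContinuousLinearMap.proj 3 : ((Fin 4) → ℝ) →L[ℝ] ℝ) x :=
    (ContinuousLinearMap.proj 3 : ((Fin 4) → ℝ) →L[ℝ] ℝ).hasFDerivAt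
  exact (h0.const_mul k0).sub (h3.const_mul k3)

lemma pd_const (P : ℝ) (l : Fin 4) (x : Fin 4 → ℝ) : pd l (fun _ => P) x = 0 := by
  simp [pd]

lemma pd_canon (k0 k3 P Q R : ℝ) (l : Fin 4) (x : Fin 4 → ℝ) :
    pd l (fun y => P + Q * Real.sin (φpw k0 k3 y) + R * Real.cos (φpw k0 k3 y)) x
      = (Q * Real.cos (φpw k0 k3 x) - R * Real.sin (φpw k0 k3 x)) * kd k0 k3 l := by
  have hφ := hasFDerivAt_phi k0 k3 x
  have hsin := (Real.hasDerivAt_sin (φpw k0 k3 x)).comp_hasFDerivAt x hφ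
  have hcos := (Real.hasDerivAt_cos (φpw k0 k3 x)).comp_hasFDerivAt x hφ
  have h := ((hasFDerivAt_const P x).add (hsin.const_mul Q)).add (hcos.const_mul R)
  have h' : HasFDerivAt
      (fun y => P + Q * Real.sin (φpw k0 k3 y) + R * Real.cos (φpw k0 k3 y))
      (0 + Q • Real.cos (φpw k0 k3 x) • (k0 • (ContinuousLinearMap.proj 0 : ((Fin 4) → ℝ) →L[ℝ] ℝ) - k3 • ContinuousLinearMap.proj 3) +
        R • -Real.sin (φpw k0 k3 x) • (k0 • (ContinuousLinearMap.proj 0 : ((Fin 4) → ℝ) →L[ℝ] ℝ) - k3 • ContinuousLinearMap.proj 3)) x := h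
  rw [pd, h'.fderiv]
  fin_cases l <;>
    simp [kd, Pi.single_apply, Function.comp] <;> ring

section aux
variable (lam ε σ k0 k3 : ℝ)

lemma pdA0 (l : Fin 4) (x : Fin 4 → ℝ) : pd l (fun y => Apw ε σ k0 k3 y 0) x = 0 := by
  have e : (fun y => Apw ε σ k0 k3 y 0) = fun _ => (0:ℝ) := by funext y; simp [Apw]
  rw [e, pd_const]

lemma pdA1 (l : Fin 4) (x : Fin 4 → ℝ) :
    pd l (fun y => Apw ε σ k0 k3 y 1) x = ε * Real.cos (φpw k0 k3 x) * kd k0 k3 l := by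
  have e : (fun y => Apw ε σ k0 k3 y 1)
      = fun y => 0 + ε * Real.sin (φpw k0 k3 y) + 0 * Real.cos (φpw k0 k3 y) := by
    funext y; simp [Apw]
  rw [e, pd_canon]; ring

lemma pdA2 (l : Fin 4) (x : Fin 4 → ℝ) :
    pd l (fun y => Apw ε σ k0 k3 y 2) x = σ * ε * Real.sin (φpw k0 k3 x) * kd k0 k3 l := by
  have e : (fun y => Apw ε σ k0 k3 y 2)
      = fun y => 0 + 0 * Real.sin (φpw k0 k3 y) + (-(σ * ε)) * Real.cos (φpw k0 k3 y) := by
    funext y; simp [Apw]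
  rw [e, pd_canon]; ring

lemma pdA3 (l : Fin 4) (x : Fin 4 → ℝ) : pd l (fun y => Apw ε σ k0 k3 y 3) x = 0 := by
  have e : (fun y => Apw ε σ k0 k3 y 3) = fun _ => (0:ℝ) := by funext y; simp [Apw]
  rw [e, pd_const]

lemma pdA_prop (l : Fin 4) (x : Fin 4 → ℝ) (m : Fin 4) :
    pd l (fun y => Apw ε σ k0 k3 y m) x
      = ![0, ε * Real.cos (φpw k0 k3 x), σ * ε * Real.sin (φpw k0 k3 x), 0] m * kd k0 k3 l := by
  fin_cases m
  · exact (pdA0 ε σ k0 k3 l x).trans (by simp)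
  · exact (pdA1 ε σ k0 k3 l x).trans (by simp)
  · exact (pdA2 ε σ k0 k3 l x).trans (by simp)
  · exact (pdA3 ε σ k0 k3 l x).trans (by simp)

lemma pb_zero {du dv : ℝ} {u v : (Fin 4 → ℝ) → ℝ} {x : Fin 4 → ℝ}
    (hu : ∀ l, pd l u x = du * kd k0 k3 l) (hv : ∀ l, pd l v x = dv * kd k0 k3 l) :
    pb (fκ lam) u v x = 0 := by
  simp only [pb, Fin.sum_univ_four, hu, hv]
  simp [fκ, kd]
  ring

lemma pbAA (c e : Fin 4) (x : Fin 4 → ℝ) :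
    pb (fκ lam) (fun y => Apw ε σ k0 k3 y c) (fun y => Apw ε σ k0 k3 y e) x = 0 :=
  pb_zero lam k0 k3 (fun l => pdA_prop ε σ k0 k3 l x c) (fun l => pdA_prop ε σ k0 k3 l x e)

/-- explicit field strength matrix as function of the phase -/
noncomputable def FMat (t : ℝ) : Matrix (Fin 4) (Fin 4) ℝ :=
  !![0, ε*k0*Real.cos t, σ*ε*k0*Real.sin t, 0;
     -(ε*k0*Real.cos t), 0, -(lam*σ*ε^2*k0), ε*k3*Real.cos t;
     -(σ*ε*k0*Real.sin t), lam*σ*ε^2*k0, 0, σ*ε*k3*Real.sin t;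
     0, -(ε*k3*Real.cos t), -(σ*ε*k3*Real.sin t), 0]

lemma Fpw_eq (x : Fin 4 → ℝ) :
    Fpw lam ε σ k0 k3 x = FMat lam ε σ k0 k3 (φpw k0 k3 x) := by
  have hs := Real.sin_sq_add_cos_sq (φpw k0 k3 x)
  ext a b
  simp only [Fpw, Fstr, Fin.sum_univ_four]
  simp only [pbAA, pdA0, pdA1, pdA2, pdA3]
  fin_cases a <;> fin_cases b <;>
    simp [ρκ, γκ, Apw, FMat, kd, add_zero, zero_add, mul_zero, zero_mul] <;>
    (first
      | ring1
      | linear_combination (-(lam*σ*ε^2*k0)) * hs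
      | linear_combination (lam*σ*ε^2*k0) * hs)

/-- constant part of `F^{c a}` -/
noncomputable def PmM : Matrix (Fin 4) (Fin 4) ℝ :=
  !![0,0,0,0; 0,0,-(lam*σ*ε^2*k0),0; 0,lam*σ*ε^2*k0,0,0; 0,0,0,0]
/-- sin coefficient of `F^{c a}` -/
noncomputable def QmM : Matrix (Fin 4) (Fin 4) ℝ :=
  !![0,0,-(σ*ε*k0),0; 0,0,0,0; σ*ε*k0,0,0,σ*ε*k3; 0,0,-(σ*ε*k3),0]
/-- cos coefficient of `F^{c a}` -/
noncomputable def RmM : Matrix (Fin 4) (Fin 4) ℝ :=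
  !![0,-(ε*k0),0,0; ε*k0,0,0,ε*k3; 0,0,0,0; 0,-(ε*k3),0,0]

lemma Fup_fun (c a : Fin 4) :
    (fun y => Fup (Fpw lam ε σ k0 k3) c a y)
      = fun y => PmM lam ε σ k0 c a + QmM ε σ k0 k3 c a * Real.sin (φpw k0 k3 y)
          + RmM ε k0 k3 c a * Real.cos (φpw k0 k3 y) := by
  funext y
  simp only [Fup, Fpw_eq, Fin.sum_univ_four]
  fin_cases c <;> fin_cases a <;>
    simp [ηm, FMat, PmM, QmM, RmM, Matrix.diagonal, Matrix.vecHead, Matrix.vecTail, Function.comp]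

lemma Fup_val (c a : Fin 4) (x : Fin 4 → ℝ) :
    Fup (Fpw lam ε σ k0 k3) c a x
      = PmM lam ε σ k0 c a + QmM ε σ k0 k3 c a * Real.sin (φpw k0 k3 x)
          + RmM ε k0 k3 c a * Real.cos (φpw k0 k3 x) :=
  congrFun (Fup_fun lam ε σ k0 k3 c a) x

lemma pdFup (c a l : Fin 4) (x : Fin 4 → ℝ) :
    pd l (fun y => Fup (Fpw lam ε σ k0 k3) c a y) x
      = (QmM ε σ k0 k3 c a * Real.cos (φpw k0 k3 x)
          - RmM ε k0 k3 c a * Real.sin (φpw k0 k3 x)) * kd k0 k3 l := by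
  rw [Fup_fun, pd_canon]

lemma pbAF (m c a : Fin 4) (x : Fin 4 → ℝ) :
    pb (fκ lam) (fun y => Apw ε σ k0 k3 y m) (fun y => Fup (Fpw lam ε σ k0 k3) c a y) x = 0 :=
  pb_zero lam k0 k3 (fun l => pdA_prop ε σ k0 k3 l x m)
    (fun l => pdFup lam ε σ k0 k3 c a l x)

set_option maxHeartbeats 4000000 in
lemma EG_eq (hσ2 : σ^2 = 1) (a : Fin 4) (x : Fin 4 → ℝ) :
    EGpw (-(1/12)) lam ε σ k0 k3 a x
      = ![3/2*lam*ε^2, ε * Real.sin (φpw k0 k3 x), -(σ*ε*Real.cos (φpw k0 k3 x)), 0] a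
          * ((1 - lam^2*ε^2)*k0^2 - k3^2) := by
  have hs := Real.sin_sq_add_cos_sq (φpw k0 k3 x)
  fin_cases a <;>
    (simp only [EGpw, EC, Dcov, Fin.sum_univ_four]
     simp only [pdFup, pbAF]
     simp only [Fup_val]
     rw [Fpw_eq]
     simp [ρκ, γκ, Apw, FMat, PmM, QmM, RmM, fκ, kd,
       Matrix.vecHead, Matrix.vecTail, Function.comp]) <;>
    (first
      | ring1
      | linear_combination
          (lam*ε^2*((-3/2)*k3^2*Real.sin (φpw k0 k3 x)^2 + k0^2*Real.cos (φpw k0 k3 x)^2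
            + (1/2)*k0^2*Real.sin (φpw k0 k3 x)^2 - (3/2)*lam^2*ε^2*k0^2)) * hσ2
          + ((3/2)*lam*ε^2*(k0^2-k3^2)) * hs
      | linear_combination (-(lam^2*ε^3*k0^2*Real.sin (φpw k0 k3 x))) * hσ2
      | linear_combination (lam*ε^2*k0*k3*(Real.cos (φpw k0 k3 x)^2
          - Real.sin (φpw k0 k3 x)^2)) * hσ2)

end aux

theorem stmt4 (lam ε k0 k3 σ : ℝ) (hε : ε ≠ 0) (hσ : σ = 1 ∨ σ = -1) :
    (∀ (x : Fin 4 → ℝ) (a : Fin 4), EGpw (-(1/12)) lam ε σ k0 k3 a x = 0)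
      ↔ (1 - lam ^ 2 * ε ^ 2) * k0 ^ 2 - k3 ^ 2 = 0 := by
  have hσ2 : σ^2 = 1 := by rcases hσ with h|h <;> rw [h] <;> norm_num
  have hσ0 : σ ≠ 0 := by rcases hσ with h|h <;> rw [h] <;> norm_num
  constructor
  · intro h
    have h2 := h (fun _ => 0) 2
    rw [EG_eq lam ε σ k0 k3 hσ2] at h2
    simp [φpw, hσ0, hε] at h2
    linarith [h2]
  · intro hD x a
    rw [EG_eq lam ε σ k0 k3 hσ2 a x, hD, mul_zero]
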